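/- Let R be a (unital, associative, not necessarily commutative) ring and let a, b ∈ R satisfy a·b − b·a = b². Then for all natural numbers p and all q ≥ 1, one has a^p·b^q = ∑_{j=0}^{p} Γ_{p,q}^j · b^{q+j}·a^{p−j}, where Γ_{p,q}^j is the natural number C(q+j−1, j)·p!/(p−j)! (binomial coefficient times falling factorial), acting via the natural-number scalar multiplication of R. -/

import Mathlib

private lemma coef_aux (p q j : ℕ) (hq : 1 ≤ q) :
    (q + (j + 1) - 1).choose (j + 1) * (p + 1).descFactorial (j + 1)
      = (q + (j + 1) - 1).choose (j + 1) * p.descFactorial (j + 1)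
        + (q + j) * ((q + j - 1).choose j * p.descFactorial j) := by
  have h1 : (p + 1).descFactorial (j + 1) = (p + 1) * p.descFactorial j :=
    Nat.succ_descFactorial_succ p j
  have h2 : p.descFactorial (j + 1) = (p - j) * p.descFactorial j :=
    Nat.descFactorial_succ p j
  have e1 : q + (j + 1) - 1 = q + j := by omega
  have h3 : (q + j) * (q + j - 1).choose j = (q + (j + 1) - 1).choose (j + 1) * (j + 1) := by
    have h4 := Nat.add_one_mul_choose_eq (q + j - 1) j
    rw [e1]
    have e2 : q + j - 1 + 1 = q + j := by omega
    rw [e2] at h4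
    exact h4
  rw [h1, h2]
  rcases le_or_gt j p with hjp | hjp
  · have hp : p + 1 = (p - j) + (j + 1) := by omega
    calc (q + (j + 1) - 1).choose (j + 1) * ((p + 1) * p.descFactorial j)
        = (q + (j + 1) - 1).choose (j + 1) * (((p - j) + (j + 1)) * p.descFactorial j) := by
          rw [← hp]
      _ = (q + (j + 1) - 1).choose (j + 1) * ((p - j) * p.descFactorial j)
          + ((q + (j + 1) - 1).choose (j + 1) * (j + 1)) * p.descFactorial j := by ring
      _ = _ := by rw [← h3]; ring
  · have hz : p.descFactorial j = 0 := Nat.descFactorial_eq_zero_iff_lt.mpr hjp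
    simp [hz]

private lemma swap_aux {R : Type*} [Ring R] (a b : R) (h : a * b - b * a = b ^ 2) :
    ∀ m : ℕ, a * b ^ m = b ^ m * a + m • b ^ (m + 1) := by
  have hab : a * b = b * a + b ^ 2 := by
    have := sub_eq_iff_eq_add.mp h
    rw [this]; ring_nf; abel
  intro m
  induction m with
  | zero => simp
  | succ m ih =>
    calc a * b ^ (m + 1) = (a * b ^ m) * b := by rw [pow_succ, ← mul_assoc]
      _ = (b ^ m * a + m • b ^ (m + 1)) * b := by rw [ih]
      _ = b ^ m * (a * b) + m • (b ^ (m + 1) * b) := by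
          rw [add_mul, mul_assoc, smul_mul_assoc]
      _ = b ^ m * (b * a) + b ^ m * b ^ 2 + m • b ^ (m + 1 + 1) := by
          rw [hab, mul_add, ← pow_succ]
      _ = b ^ (m + 1) * a + b ^ (m + 1 + 1) + m • b ^ (m + 1 + 1) := by
          rw [← mul_assoc, ← pow_succ, ← pow_add]
      _ = b ^ (m + 1) * a + (m + 1) • b ^ (m + 1 + 1) := by
          rw [succ_nsmul]; abel

/-- In a ring with `ab - ba = b²`, for `p ≥ 0` and `q ≥ 1`:
`a^p b^q = ∑_{j=0}^{p} Γ_{p,q}^j b^{q+j} a^{p-j}` with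
`Γ_{p,q}^j = C(q+j-1, j) · p!/(p-j)!`. -/
theorem stmt_7 {R : Type*} [Ring R] (a b : R) (h : a * b - b * a = b ^ 2)
    (p q : ℕ) (hq : 1 ≤ q) :
    a ^ p * b ^ q = ∑ j ∈ Finset.range (p + 1),
      (((q + j - 1).choose j) * p.descFactorial j) • (b ^ (q + j) * a ^ (p - j)) := by
  induction p with
  | zero => simp
  | succ p ih =>
    have key := swap_aux a b h
    have lhs_eq : a ^ (p + 1) * b ^ q = a * (a ^ p * b ^ q) := by
      rw [pow_succ', mul_assoc]
    rw [lhs_eq, ih, Finset.mul_sum]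
    have step : ∀ j ∈ Finset.range (p + 1),
        a * ((((q + j - 1).choose j) * p.descFactorial j) • (b ^ (q + j) * a ^ (p - j)))
        = (((q + j - 1).choose j) * p.descFactorial j) • (b ^ (q + j) * a ^ (p + 1 - j))
          + ((((q + j - 1).choose j) * p.descFactorial j) * (q + j)) •
              (b ^ (q + j + 1) * a ^ (p - j)) := by
      intro j hj
      rw [Finset.mem_range] at hj
      have hjp : j ≤ p := Nat.lt_succ_iff.mp hj
      have ha : a * a ^ (p - j) = a ^ (p + 1 - j) := by
        rw [← pow_succ']; congr 1; omega
      rw [mul_smul_comm, ← mul_assoc, key (q + j), add_mul, mul_assoc, ha,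
        smul_mul_assoc, smul_add, smul_smul]
    rw [Finset.sum_congr rfl step, Finset.sum_add_distrib]
    have rhs_split : ∀ j : ℕ,
        ((q + j - 1).choose j * (p + 1).descFactorial j : ℕ)
          • (b ^ (q + j) * a ^ (p + 1 - j))
        = ((q + j - 1).choose j * p.descFactorial j) • (b ^ (q + j) * a ^ (p + 1 - j))
          + (if j = 0 then (0:R) else
              ((q + (j-1)) * ((q + (j-1) - 1).choose (j-1) * p.descFactorial (j-1)))
                • (b ^ (q + j) * a ^ (p + 1 - j))) := by
      intro j
      cases j with
      | zero => simp
      | succ j =>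
        simp only [Nat.succ_ne_zero, if_false, Nat.add_sub_cancel]
        rw [coef_aux p q j hq, add_smul]
    rw [Finset.sum_congr rfl (fun j _ => rhs_split j), Finset.sum_add_distrib]
    congr 1
    · conv_rhs => rw [Finset.sum_range_succ]
      have hz : p.descFactorial (p + 1) = 0 :=
        Nat.descFactorial_eq_zero_iff_lt.mpr (Nat.lt_succ_self p)
      rw [hz, Nat.mul_zero, zero_smul, add_zero]
    · conv_rhs => rw [Finset.sum_range_succ']
      simp only [Nat.succ_ne_zero, if_false, if_true, ite_true, ite_false,
        Nat.add_sub_cancel, add_zero]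
      apply Finset.sum_congr rfl
      intro j hj
      have e1 : p + 1 - (j + 1) = p - j := by omega
      have e2 : q + (j + 1) = q + j + 1 := by omega
      rw [e1, e2]
      congr 1
      ring
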